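/- Let A ∈ ℝ^{n×n} be positive definite (xᵀAx > 0 for all nonzero x), write H = (A + Aᵀ)/2 and S = (A − Aᵀ)/2. Let λ_min and λ_max be the minimum and maximum eigenvalues of the symmetric matrix H, and let μ_max be the maximum of the absolute values of the (complex) eigenvalues of S. Let B ∈ ℝ^{n×n} with ‖B‖ = τ, b ∈ ℝⁿ, θ ∈ [0,1), ω > 0 and Ω = ωI. Suppose F(x*) = 0 and ω + λ_min − τ > √(ω² + μ_max²) + θ(ω + λ_max + τ + √(ω² + μ_max²)). Then any sequence {x^k} in ℝⁿ satisfying ‖(ωI + H)x^{k+1} − [(ωI − S)x^k + B|x^k| + b]‖ ≤ θ‖F(x^k)‖ for all k ≥ 0 converges linearly to x* from any starting point x^0. -/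

import Mathlib

open Matrix Filter

/-- Componentwise absolute value of a vector in Euclidean space. -/
noncomputable def vabs {n : ℕ} (x : EuclideanSpace ℝ (Fin n)) : EuclideanSpace ℝ (Fin n) :=
  WithLp.toLp 2 (fun i => |x i|)

/-- A matrix acting on Euclidean space (so that vector norms are the Euclidean 2-norm). -/
noncomputable def mulV {n : ℕ} (M : Matrix (Fin n) (Fin n) ℝ) (x : EuclideanSpace ℝ (Fin n)) :
    EuclideanSpace ℝ (Fin n) :=
  Matrix.toEuclideanCLM (𝕜 := ℝ) M x

/-- Spectral norm of a real matrix: the operator norm induced by the Euclidean vector norm. -/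
noncomputable def spec {n : ℕ} (M : Matrix (Fin n) (Fin n) ℝ) : ℝ :=
  ‖Matrix.toEuclideanCLM (𝕜 := ℝ) M‖

/-- The GAVE residual function `F(x) = A x − B |x| − b`. -/
noncomputable def gaveF {n : ℕ} (A B : Matrix (Fin n) (Fin n) ℝ)
    (b : EuclideanSpace ℝ (Fin n)) (x : EuclideanSpace ℝ (Fin n)) : EuclideanSpace ℝ (Fin n) :=
  mulV A x - mulV B (vabs x) - b

/-- The AVE residual function `A x − |x| − b` (the GAVE with `B = I`). -/
noncomputable def aveF {n : ℕ} (A : Matrix (Fin n) (Fin n) ℝ)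
    (b : EuclideanSpace ℝ (Fin n)) (x : EuclideanSpace ℝ (Fin n)) : EuclideanSpace ℝ (Fin n) :=
  mulV A x - vabs x - b

/-- A sequence converges linearly to `xs`: the distances to `xs` contract by a fixed
factor `c < 1` at every step, and the sequence tends to `xs`. -/
def ConvergesLinearlyTo {n : ℕ} (x : ℕ → EuclideanSpace ℝ (Fin n))
    (xs : EuclideanSpace ℝ (Fin n)) : Prop :=
  (∃ c : ℝ, 0 ≤ c ∧ c < 1 ∧ ∀ k : ℕ, ‖x (k + 1) - xs‖ ≤ c * ‖x k - xs‖) ∧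
    Tendsto x atTop (nhds xs)

set_option maxHeartbeats 1000000

section Aux

variable {n : ℕ}

private lemma herm_of_symm {M : Matrix (Fin n) (Fin n) ℝ} (h : Mᵀ = M) : M.IsHermitian := by
  rw [Matrix.IsHermitian, Matrix.conjTranspose]
  ext i j
  simp only [Matrix.map_apply, star_trivial]
  exact congrFun (congrFun h i) j

private lemma spectrum_shift {M : Matrix (Fin n) (Fin n) ℝ} {c μ : ℝ}
    (h : μ ∈ spectrum ℝ (M - c • (1 : Matrix (Fin n) (Fin n) ℝ))) :
    μ + c ∈ spectrum ℝ M := by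
  rw [spectrum.mem_iff] at h ⊢
  convert h using 2
  rw [Algebra.algebraMap_eq_smul_one, Algebra.algebraMap_eq_smul_one, add_smul]
  noncomm_ring

private lemma spectrum_shift' {M : Matrix (Fin n) (Fin n) ℝ} {c μ : ℝ}
    (h : μ ∈ spectrum ℝ (M + c • (1 : Matrix (Fin n) (Fin n) ℝ))) :
    μ - c ∈ spectrum ℝ M := by
  rw [spectrum.mem_iff] at h ⊢
  convert h using 2
  rw [Algebra.algebraMap_eq_smul_one, Algebra.algebraMap_eq_smul_one, sub_smul]
  noncomm_ring

private lemma sq_le_aux {a b : ℝ} (ha : 0 ≤ a) (hb : 0 ≤ b) (h : a ^ 2 ≤ b ^ 2) :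
    a ≤ b := by nlinarith

private lemma mulV_sub (M : Matrix (Fin n) (Fin n) ℝ) (u v : EuclideanSpace ℝ (Fin n)) :
    mulV M (u - v) = mulV M u - mulV M v := by simp [mulV, map_sub]

private lemma quad_lower {M : Matrix (Fin n) (Fin n) ℝ} (hsym : Mᵀ = M) {c : ℝ}
    (h : ∀ μ ∈ spectrum ℝ M, c ≤ μ) (x : EuclideanSpace ℝ (Fin n)) :
    c * ‖x‖ ^ 2 ≤ @inner ℝ _ _ x (mulV M x) := by
  have hPsym : (M - c • (1 : Matrix (Fin n) (Fin n) ℝ)).IsHermitian := by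
    apply herm_of_symm
    simp [Matrix.transpose_smul, hsym]
  have hPpsd : (M - c • (1 : Matrix (Fin n) (Fin n) ℝ)).PosSemidef := by
    apply hPsym.posSemidef_iff_eigenvalues_nonneg.mpr
    intro i
    show 0 ≤ hPsym.eigenvalues i
    have hmem := spectrum_shift (hPsym.eigenvalues_mem_spectrum_real i)
    linarith [h _ hmem]
  have h0 : 0 ≤ @inner ℝ _ _ x (mulV (M - c • (1 : Matrix (Fin n) (Fin n) ℝ)) x) := by
    rw [PiLp.inner_apply]
    have := hPpsd.dotProduct_mulVec_nonneg (fun i => x i)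
    have e : ∀ i, mulV (M - c • (1 : Matrix (Fin n) (Fin n) ℝ)) x i
        = ((M - c • (1 : Matrix (Fin n) (Fin n) ℝ)) *ᵥ fun j => x j) i := fun i => rfl
    simp only [e]
    simpa [dotProduct, RCLike.inner_apply, mul_comm] using this
  have hsplit : mulV (M - c • (1 : Matrix (Fin n) (Fin n) ℝ)) x = mulV M x - c • x := by
    simp [mulV, map_sub, _root_.map_smul]
  rw [hsplit, inner_sub_right, real_inner_smul_right, real_inner_self_eq_norm_sq] at h0
  linarith

private lemma inner_mulV_transpose (M : Matrix (Fin n) (Fin n) ℝ)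
    (x y : EuclideanSpace ℝ (Fin n)) :
    @inner ℝ _ _ x (mulV M y) = @inner ℝ _ _ (mulV Mᵀ x) y := by
  rw [PiLp.inner_apply, PiLp.inner_apply]
  simp only [RCLike.inner_apply, starRingEnd_apply, star_trivial]
  have h1 : ∀ i, mulV M y i = (M *ᵥ (fun j => y j)) i := fun i => rfl
  simp only [h1]
  have h2 : ∀ i, mulV Mᵀ x i = (Mᵀ *ᵥ (fun j => x j)) i := fun i => rfl
  simp only [h2]
  calc ∑ i, (M *ᵥ fun j => y j) i * x i
      = (fun j => x j) ⬝ᵥ (M *ᵥ fun j => y j) := by simp only [dotProduct, mul_comm]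
    _ = ((fun j => x j) ᵥ* M) ⬝ᵥ (fun j => y j) := dotProduct_mulVec _ _ _
    _ = (Mᵀ *ᵥ fun j => x j) ⬝ᵥ (fun j => y j) := by rw [← mulVec_transpose]
    _ = ∑ i, y i * (Mᵀ *ᵥ fun j => x j) i := by simp only [dotProduct, mul_comm]

private lemma inner_mulV_symm {M : Matrix (Fin n) (Fin n) ℝ} (hsym : Mᵀ = M)
    (x y : EuclideanSpace ℝ (Fin n)) :
    @inner ℝ _ _ x (mulV M y) = @inner ℝ _ _ (mulV M x) y := by
  rw [inner_mulV_transpose, hsym]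

private lemma norm_mulV_le {M : Matrix (Fin n) (Fin n) ℝ} (hsym : Mᵀ = M) {C : ℝ} (hC : 0 ≤ C)
    (h : ∀ x : EuclideanSpace ℝ (Fin n), |@inner ℝ _ _ x (mulV M x)| ≤ C * ‖x‖ ^ 2)
    (u : EuclideanSpace ℝ (Fin n)) : ‖mulV M u‖ ≤ C * ‖u‖ := by
  have key : ∀ v : EuclideanSpace ℝ (Fin n), ‖v‖ = ‖u‖ →
      @inner ℝ _ _ (mulV M u) v ≤ C * ‖u‖ ^ 2 := by
    intro v hv
    have hadd : mulV M (u + v) = mulV M u + mulV M v := by simp [mulV, map_add]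
    have hsub : mulV M (u - v) = mulV M u - mulV M v := by simp [mulV, map_sub]
    have e1 : @inner ℝ _ _ (u + v) (mulV M (u + v)) - @inner ℝ _ _ (u - v) (mulV M (u - v))
        = 4 * @inner ℝ _ _ (mulV M u) v := by
      rw [hadd, hsub, inner_add_right, inner_add_left, inner_add_left,
        inner_sub_right, inner_sub_left, inner_sub_left,
        inner_mulV_symm hsym u v, real_inner_comm v (mulV M u)]
      ring
    have b1 := h (u + v)
    have b2 := h (u - v)
    have par : ‖u + v‖ ^ 2 + ‖u - v‖ ^ 2 = 2 * (‖u‖ ^ 2 + ‖v‖ ^ 2) := by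
      have := parallelogram_law_with_norm ℝ u v
      nlinarith [this]
    have h1 : @inner ℝ _ _ (u + v) (mulV M (u + v)) ≤ C * ‖u + v‖ ^ 2 := (abs_le.mp b1).2
    have h2 : -(C * ‖u - v‖ ^ 2) ≤ @inner ℝ _ _ (u - v) (mulV M (u - v)) := (abs_le.mp b2).1
    have hv2 : ‖v‖ ^ 2 = ‖u‖ ^ 2 := by rw [hv]
    have hpq : ‖u + v‖ ^ 2 + ‖u - v‖ ^ 2 = 4 * ‖u‖ ^ 2 := by rw [par, hv2]; ring
    have hCpq : C * (‖u + v‖ ^ 2 + ‖u - v‖ ^ 2) = 4 * (C * ‖u‖ ^ 2) := by rw [hpq]; ring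
    linarith [e1, h1, h2, hCpq]
  rcases eq_or_ne (mulV M u) 0 with h0 | h0
  · rw [h0, norm_zero]; positivity
  rcases eq_or_ne u 0 with hu | hu
  · rw [hu] at h0; simp [mulV] at h0
  have hTu : (0:ℝ) < ‖mulV M u‖ := norm_pos_iff.mpr h0
  have hu' : (0:ℝ) < ‖u‖ := norm_pos_iff.mpr hu
  have := key ((‖u‖ / ‖mulV M u‖) • mulV M u) (by
    rw [norm_smul, Real.norm_eq_abs, abs_div, abs_of_pos hu', abs_of_pos hTu]
    field_simp)
  rw [real_inner_smul_right, real_inner_self_eq_norm_sq] at this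
  have h3 : ‖u‖ * ‖mulV M u‖ ≤ C * ‖u‖ ^ 2 := by
    have heq : ‖u‖ / ‖mulV M u‖ * ‖mulV M u‖ ^ 2 = ‖u‖ * ‖mulV M u‖ := by
      field_simp
    linarith [heq ▸ this]
  nlinarith

private lemma norm_mulV_of_spectrum {M : Matrix (Fin n) (Fin n) ℝ} (hsym : Mᵀ = M) {C : ℝ}
    (hC : 0 ≤ C) (h : ∀ μ ∈ spectrum ℝ M, |μ| ≤ C) (v : EuclideanSpace ℝ (Fin n)) :
    ‖mulV M v‖ ≤ C * ‖v‖ := by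
  apply norm_mulV_le hsym hC
  intro v
  have h1 := quad_lower hsym (c := -C) (fun μ hμ => (abs_le.mp (h μ hμ)).1) v
  have hnsym : (-M)ᵀ = -M := by rw [Matrix.transpose_neg, hsym]
  have h2 := quad_lower hnsym (c := -C) (fun μ hμ => by
    have hmem : -μ ∈ spectrum ℝ M := by
      rw [← spectrum.neg_eq, Set.mem_neg] at hμ
      simpa using hμ
    have := (abs_le.mp (h _ hmem)).2
    linarith) v
  have hneg : mulV (-M) v = -(mulV M v) := by simp [mulV, map_neg]
  rw [hneg, inner_neg_right] at h2
  rw [abs_le]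
  constructor <;> nlinarith

private lemma spectrum_map_complex {M : Matrix (Fin n) (Fin n) ℝ} {μ : ℝ}
    (h : μ ∈ spectrum ℝ M) :
    (μ : ℂ) ∈ spectrum ℂ (M.map ((↑) : ℝ → ℂ)) := by
  rw [spectrum.mem_iff] at h ⊢
  intro hunit
  apply h
  rw [Matrix.isUnit_iff_isUnit_det] at hunit ⊢
  rw [isUnit_iff_ne_zero] at hunit ⊢
  intro hdet
  apply hunit
  have hmap : (algebraMap ℂ (Matrix (Fin n) (Fin n) ℂ)) (μ:ℂ) - M.map ((↑) : ℝ → ℂ)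
      = ((algebraMap ℝ (Matrix (Fin n) (Fin n) ℝ)) μ - M).map ((↑) : ℝ → ℂ) := by
    ext i j
    simp [Matrix.algebraMap_matrix_apply, apply_ite]
  rw [hmap]
  have hdm : (((algebraMap ℝ (Matrix (Fin n) (Fin n) ℝ)) μ - M).map ((↑) : ℝ → ℂ)).det
      = (((algebraMap ℝ (Matrix (Fin n) (Fin n) ℝ)) μ - M).det : ℂ) :=
    (RingHom.map_det Complex.ofRealHom _).symm
  rw [hdm, hdet]
  simp

private lemma vabs_lipschitz (x y : EuclideanSpace ℝ (Fin n)) :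
    ‖vabs x - vabs y‖ ≤ ‖x - y‖ := by
  rw [EuclideanSpace.norm_eq, EuclideanSpace.norm_eq]
  apply Real.sqrt_le_sqrt
  apply Finset.sum_le_sum
  intro i _
  have h1 : (vabs x - vabs y) i = |x i| - |y i| := by simp [vabs]
  have h2 : (x - y) i = x i - y i := rfl
  rw [h1, h2, Real.norm_eq_abs, Real.norm_eq_abs]
  have h3 : |(|x i| - |y i|)| ≤ |x i - y i| := abs_abs_sub_abs_le_abs_sub (x i) (y i)
  nlinarith [abs_nonneg (|x i| - |y i|), abs_nonneg (x i - y i),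
    sq_abs (|x i| - |y i|), sq_abs (x i - y i)]

end Aux

theorem stmt13 {n : ℕ} (A B H S : Matrix (Fin n) (Fin n) ℝ)
    (b : EuclideanSpace ℝ (Fin n))
    (hposdef : ∀ v : Fin n → ℝ, v ≠ 0 → 0 < v ⬝ᵥ A.mulVec v)
    (hH : H = (2 : ℝ)⁻¹ • (A + Aᵀ)) (hS : S = (2 : ℝ)⁻¹ • (A - Aᵀ))
    (lammin lammax mumax τ : ℝ)
    (hmin : IsLeast (spectrum ℝ H) lammin) (hmax : IsGreatest (spectrum ℝ H) lammax)
    (hmu : IsGreatest ((fun z : ℂ => ‖z‖) ''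
      spectrum ℂ (S.map ((↑) : ℝ → ℂ))) mumax)
    (hτ : spec B = τ) (θ ω : ℝ) (hθ0 : 0 ≤ θ) (hθ1 : θ < 1) (hω : 0 < ω)
    (xs : EuclideanSpace ℝ (Fin n)) (hxs : gaveF A B b xs = 0)
    (hcond : ω + lammin - τ > Real.sqrt (ω ^ 2 + mumax ^ 2) +
      θ * (ω + lammax + τ + Real.sqrt (ω ^ 2 + mumax ^ 2)))
    (x : ℕ → EuclideanSpace ℝ (Fin n))
    (hx : ∀ k : ℕ, ‖mulV (ω • (1 : Matrix (Fin n) (Fin n) ℝ) + H) (x (k + 1)) -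
        (mulV (ω • (1 : Matrix (Fin n) (Fin n) ℝ) - S) (x k) + mulV B (vabs (x k)) + b)‖ ≤
      θ * ‖gaveF A B b (x k)‖) :
    ConvergesLinearlyTo x xs := by
  -- basic matrix identities
  have hHsym : Hᵀ = H := by
    rw [hH, Matrix.transpose_smul, Matrix.transpose_add, Matrix.transpose_transpose, add_comm Aᵀ A]
  have hSskew : Sᵀ = -S := by
    rw [hS, Matrix.transpose_smul, Matrix.transpose_sub, Matrix.transpose_transpose,
      ← smul_neg, neg_sub]
  have hHS : H + S = A := by
    rw [hH, hS, ← smul_add,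
      show A + Aᵀ + (A - Aᵀ) = (2:ℝ) • A by rw [two_smul]; abel, smul_smul]
    norm_num
  -- nonnegativity facts
  have hmumax0 : 0 ≤ mumax := by
    obtain ⟨z, _, hz⟩ := hmu.1
    rw [← hz]; exact norm_nonneg z
  have hτ0 : 0 ≤ τ := hτ ▸ norm_nonneg _
  set r : ℝ := Real.sqrt (ω ^ 2 + mumax ^ 2) with hr
  have hr0 : 0 ≤ r := Real.sqrt_nonneg _
  -- lammin > 0
  have hlammin0 : 0 < lammin := by
    have hmem := hmin.1
    rw [spectrum.mem_iff, Matrix.isUnit_iff_isUnit_det, isUnit_iff_ne_zero, not_not] at hmem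
    obtain ⟨v, hv0, hv⟩ := (Matrix.exists_mulVec_eq_zero_iff).mpr hmem
    have hHv : H *ᵥ v = lammin • v := by
      have he : ((algebraMap ℝ (Matrix (Fin n) (Fin n) ℝ)) lammin - H) *ᵥ v
          = lammin • v - H *ᵥ v := by
        rw [Matrix.sub_mulVec, Algebra.algebraMap_eq_smul_one, Matrix.smul_mulVec,
          Matrix.one_mulVec]
      rw [he] at hv
      linear_combination (norm := module) -hv
    have hvAv : 0 < v ⬝ᵥ A *ᵥ v := hposdef v hv0
    have hkey : v ⬝ᵥ Aᵀ *ᵥ v = v ⬝ᵥ A *ᵥ v := by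
      rw [mulVec_transpose, dotProduct_mulVec v A, dotProduct_comm]
    have hvHv : v ⬝ᵥ H *ᵥ v = v ⬝ᵥ A *ᵥ v := by
      rw [hH, Matrix.smul_mulVec, Matrix.add_mulVec, dotProduct_smul, smul_eq_mul,
        dotProduct_add, hkey]
      ring
    have hdot : v ⬝ᵥ H *ᵥ v = lammin * (v ⬝ᵥ v) := by
      rw [hHv, dotProduct_smul, smul_eq_mul]
    have hvvnn : 0 ≤ v ⬝ᵥ v := Finset.sum_nonneg fun i _ => mul_self_nonneg (v i)
    have hvvne : v ⬝ᵥ v ≠ 0 := fun hzero => hv0 (dotProduct_self_eq_zero.mp hzero)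
    have hvv : 0 < v ⬝ᵥ v := lt_of_le_of_ne hvvnn (Ne.symm hvvne)
    nlinarith
  have hlammax : lammin ≤ lammax := hmax.2 hmin.1
  -- bound on B
  have hmulV_B : ∀ w : EuclideanSpace ℝ (Fin n), ‖mulV B w‖ ≤ τ * ‖w‖ := fun w => by
    have := (Matrix.toEuclideanCLM (𝕜 := ℝ) B).le_opNorm w
    rw [← hτ]; exact this
  -- the matrices W and V
  set W : Matrix (Fin n) (Fin n) ℝ := ω • (1 : Matrix (Fin n) (Fin n) ℝ) + H with hW
  set V : Matrix (Fin n) (Fin n) ℝ := ω • (1 : Matrix (Fin n) (Fin n) ℝ) - S with hV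
  have hWsym : Wᵀ = W := by
    rw [hW, Matrix.transpose_add, Matrix.transpose_smul, Matrix.transpose_one, hHsym]
  have hspecW : ∀ μ ∈ spectrum ℝ W, ω + lammin ≤ μ ∧ μ ≤ ω + lammax := by
    intro μ hμ
    have hμ' : μ ∈ spectrum ℝ (H + ω • (1 : Matrix (Fin n) (Fin n) ℝ)) := by
      rw [hW] at hμ
      rwa [add_comm] at hμ
    have hsh := spectrum_shift' hμ'
    exact ⟨by linarith [hmin.2 hsh], by linarith [hmax.2 hsh]⟩
  -- lower bound for W
  have L_low : ∀ v : EuclideanSpace ℝ (Fin n), (ω + lammin) * ‖v‖ ≤ ‖mulV W v‖ := by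
    intro v
    rcases eq_or_ne v 0 with hv | hv
    · simp [hv, mulV]
    have hv' : (0:ℝ) < ‖v‖ := norm_pos_iff.mpr hv
    have hq := quad_lower hWsym (c := ω + lammin) (fun μ h => (hspecW μ h).1) v
    have hcs : @inner ℝ _ _ v (mulV W v) ≤ ‖v‖ * ‖mulV W v‖ := real_inner_le_norm _ _
    nlinarith
  -- upper bound for W
  have L_up : ∀ v : EuclideanSpace ℝ (Fin n), ‖mulV W v‖ ≤ (ω + lammax) * ‖v‖ := by
    apply norm_mulV_of_spectrum hWsym (by linarith)
    intro μ hμ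
    obtain ⟨hlo, hhi⟩ := hspecW μ hμ
    rw [abs_le]
    exact ⟨by linarith, hhi⟩
  -- bound for S
  have hSS_sym : (Sᵀ * S)ᵀ = Sᵀ * S := by
    rw [Matrix.transpose_mul, Matrix.transpose_transpose]
  have hSS_spec : ∀ μ ∈ spectrum ℝ (Sᵀ * S), |μ| ≤ mumax ^ 2 := by
    intro μ hμ
    have hc := spectrum_map_complex hμ
    have hmapmul : (Sᵀ * S).map ((↑) : ℝ → ℂ) = -((S.map ((↑) : ℝ → ℂ)) ^ 2) := by
      rw [hSskew, show ((-S) * S).map ((↑) : ℝ → ℂ)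
          = ((-S).map ((↑) : ℝ → ℂ)) * (S.map ((↑) : ℝ → ℂ)) from
        Matrix.map_mul (f := Complex.ofRealHom)]
      have : (-S).map ((↑) : ℝ → ℂ) = -(S.map ((↑) : ℝ → ℂ)) := by
        ext i j; simp
      rw [this, pow_two, neg_mul]
    rw [hmapmul] at hc
    rw [← spectrum.neg_eq, Set.mem_neg] at hc
    rw [spectrum.map_pow_of_pos _ (by norm_num : 0 < 2)] at hc
    obtain ⟨z, hz, hz2⟩ := hc
    have hzb : ‖z‖ ≤ mumax := hmu.2 ⟨z, hz, rfl⟩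
    have habs : ‖(-(μ:ℂ))‖ = ‖z‖ ^ 2 := by
      rw [← hz2, norm_pow]
    rw [norm_neg, Complex.norm_real, Real.norm_eq_abs] at habs
    rw [habs]
    have := norm_nonneg z
    nlinarith
  have L_S : ∀ v : EuclideanSpace ℝ (Fin n), ‖mulV S v‖ ≤ mumax * ‖v‖ := by
    have hSS := norm_mulV_of_spectrum hSS_sym (C := mumax ^ 2) (by positivity) hSS_spec
    intro v
    have h1 : ‖mulV S v‖ ^ 2 = @inner ℝ _ _ (mulV (Sᵀ * S) v) v := by
      have e1 : @inner ℝ _ _ (mulV S v) (mulV S v)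
          = @inner ℝ _ _ (mulV Sᵀ (mulV S v)) v := inner_mulV_transpose S (mulV S v) v
      have e2 : mulV Sᵀ (mulV S v) = mulV (Sᵀ * S) v := by
        simp [mulV, _root_.map_mul]
      rw [← real_inner_self_eq_norm_sq, e1, e2]
    have h2 : @inner ℝ _ _ (mulV (Sᵀ * S) v) v ≤ ‖mulV (Sᵀ * S) v‖ * ‖v‖ :=
      real_inner_le_norm _ _
    have h3 := hSS v
    apply sq_le_aux (norm_nonneg _) (mul_nonneg hmumax0 (norm_nonneg _))
    calc ‖mulV S v‖ ^ 2 ≤ ‖mulV (Sᵀ * S) v‖ * ‖v‖ := by rw [h1]; exact h2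
      _ ≤ (mumax ^ 2 * ‖v‖) * ‖v‖ := mul_le_mul_of_nonneg_right h3 (norm_nonneg _)
      _ = (mumax * ‖v‖) ^ 2 := by ring
  -- bound for V
  have L_V : ∀ v : EuclideanSpace ℝ (Fin n), ‖mulV V v‖ ≤ r * ‖v‖ := by
    intro v
    have hVv : mulV V v = ω • v - mulV S v := by
      simp [hV, mulV, map_sub, _root_.map_smul]
    have hinner0' : @inner ℝ _ _ (mulV S v) v = 0 := by
      have hthis := inner_mulV_transpose S v v
      rw [hSskew] at hthis
      have hneg : mulV (-S) v = -(mulV S v) := by simp [mulV, map_neg]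
      rw [hneg, inner_neg_left] at hthis
      have hc := real_inner_comm (mulV S v) v
      linarith [hthis, hc]
    have hinner0 : @inner ℝ _ _ v (mulV S v) = 0 := by
      rw [real_inner_comm]; exact hinner0'
    have habs : (|ω| * ‖v‖) ^ 2 = ω ^ 2 * ‖v‖ ^ 2 := by rw [mul_pow, sq_abs]
    have hsq : ‖mulV V v‖ ^ 2 = ω ^ 2 * ‖v‖ ^ 2 + ‖mulV S v‖ ^ 2 := by
      rw [hVv, norm_sub_sq_real, real_inner_smul_left, hinner0, norm_smul,
        Real.norm_eq_abs, habs]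
      ring
    have hSb := L_S v
    have hle : ‖mulV V v‖ ^ 2 ≤ (ω ^ 2 + mumax ^ 2) * ‖v‖ ^ 2 := by
      have hs2 : ‖mulV S v‖ ^ 2 ≤ (mumax * ‖v‖) ^ 2 := by
        have := mul_self_le_mul_self (norm_nonneg (mulV S v)) hSb
        nlinarith [this]
      rw [hsq]; nlinarith [hs2]
    have hrsq : (r * ‖v‖) ^ 2 = (ω ^ 2 + mumax ^ 2) * ‖v‖ ^ 2 := by
      rw [mul_pow, hr, Real.sq_sqrt (by positivity)]
    apply sq_le_aux (norm_nonneg _) (mul_nonneg hr0 (norm_nonneg _))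
    rw [hrsq]; exact hle
  -- decomposition of A and b
  have hA_split : ∀ u : EuclideanSpace ℝ (Fin n), mulV A u = mulV W u - mulV V u := by
    intro u
    have hWV : W - V = A := by
      rw [hW, hV, ← hHS]; abel
    rw [← hWV]
    simp [mulV, map_sub]
  have hb' : b = mulV A xs - mulV B (vabs xs) := by
    have := hxs
    unfold gaveF at this
    rw [sub_eq_zero] at this
    exact this.symm
  -- residual bound
  have hF_le : ∀ y : EuclideanSpace ℝ (Fin n),
      ‖gaveF A B b y‖ ≤ (ω + lammax + r + τ) * ‖y - xs‖ := by
    intro y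
    have hFid : gaveF A B b y = mulV A (y - xs) - mulV B (vabs y - vabs xs) := by
      unfold gaveF
      rw [hb', mulV_sub A y xs, mulV_sub B (vabs y) (vabs xs)]
      abel
    rw [hFid]
    calc ‖mulV A (y - xs) - mulV B (vabs y - vabs xs)‖
        ≤ ‖mulV A (y - xs)‖ + ‖mulV B (vabs y - vabs xs)‖ := norm_sub_le _ _
      _ ≤ (‖mulV W (y - xs)‖ + ‖mulV V (y - xs)‖) + τ * ‖vabs y - vabs xs‖ := by
          apply add_le_add
          · rw [hA_split]; exact norm_sub_le _ _
          · exact hmulV_B _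
      _ ≤ ((ω + lammax) * ‖y - xs‖ + r * ‖y - xs‖) + τ * ‖y - xs‖ := by
          apply add_le_add (add_le_add (L_up _) (L_V _))
          exact mul_le_mul_of_nonneg_left (vabs_lipschitz y xs) hτ0
      _ = (ω + lammax + r + τ) * ‖y - xs‖ := by ring
  -- the contraction factor
  set N : ℝ := r + τ + θ * (ω + lammax + τ + r) with hN
  set d : ℝ := ω + lammin with hd
  have hNd : N < d := by
    rw [hN, hd]; linarith [hcond]
  have hN0 : 0 ≤ N := by
    have : 0 ≤ θ * (ω + lammax + τ + r) :=
      mul_nonneg hθ0 (by linarith)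
    rw [hN]; linarith
  have hd0 : 0 < d := lt_of_le_of_lt hN0 hNd
  have hcontr : ∀ k : ℕ, ‖x (k + 1) - xs‖ ≤ (N / d) * ‖x k - xs‖ := by
    intro k
    have hWxs : mulV W xs = mulV V xs + mulV B (vabs xs) + b := by
      rw [hb', hA_split xs]; abel
    have hkey : mulV W (x (k + 1) - xs) =
        (mulV W (x (k + 1)) - (mulV V (x k) + mulV B (vabs (x k)) + b))
        + mulV V (x k - xs) + mulV B (vabs (x k) - vabs xs) := by
      rw [mulV_sub W, mulV_sub V, mulV_sub B, hWxs]
      abel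
    have h2 : ‖mulV W (x (k + 1) - xs)‖
        ≤ θ * ‖gaveF A B b (x k)‖ + r * ‖x k - xs‖ + τ * ‖x k - xs‖ := by
      rw [hkey]
      calc ‖_ + mulV V (x k - xs) + mulV B (vabs (x k) - vabs xs)‖
          ≤ ‖(mulV W (x (k + 1)) - (mulV V (x k) + mulV B (vabs (x k)) + b))
              + mulV V (x k - xs)‖ + ‖mulV B (vabs (x k) - vabs xs)‖ := norm_add_le _ _
        _ ≤ (‖mulV W (x (k + 1)) - (mulV V (x k) + mulV B (vabs (x k)) + b)‖
              + ‖mulV V (x k - xs)‖) + ‖mulV B (vabs (x k) - vabs xs)‖ := by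
            exact add_le_add_left (norm_add_le _ _) _
        _ ≤ (θ * ‖gaveF A B b (x k)‖ + r * ‖x k - xs‖) + τ * ‖x k - xs‖ := by
            apply add_le_add (add_le_add (hx k) (L_V _))
            calc ‖mulV B (vabs (x k) - vabs xs)‖ ≤ τ * ‖vabs (x k) - vabs xs‖ := hmulV_B _
              _ ≤ τ * ‖x k - xs‖ := mul_le_mul_of_nonneg_left (vabs_lipschitz _ _) hτ0
        _ = θ * ‖gaveF A B b (x k)‖ + r * ‖x k - xs‖ + τ * ‖x k - xs‖ := by ring
    have h3 : θ * ‖gaveF A B b (x k)‖ ≤ θ * ((ω + lammax + r + τ) * ‖x k - xs‖) :=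
      mul_le_mul_of_nonneg_left (hF_le _) hθ0
    have h1 := L_low (x (k + 1) - xs)
    have hdN : d * ‖x (k + 1) - xs‖ ≤ N * ‖x k - xs‖ := by
      have : d * ‖x (k + 1) - xs‖ ≤ θ * ((ω + lammax + r + τ) * ‖x k - xs‖)
          + r * ‖x k - xs‖ + τ * ‖x k - xs‖ := by
        linarith
      calc d * ‖x (k + 1) - xs‖
          ≤ θ * ((ω + lammax + r + τ) * ‖x k - xs‖) + r * ‖x k - xs‖ + τ * ‖x k - xs‖ := this
        _ = N * ‖x k - xs‖ := by rw [hN]; ring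
    rw [div_mul_eq_mul_div, le_div_iff₀ hd0, mul_comm]
    exact hdN
  have hc0 : 0 ≤ N / d := div_nonneg hN0 hd0.le
  have hc1 : N / d < 1 := (div_lt_one hd0).mpr hNd
  have hgeo : ∀ k : ℕ, ‖x k - xs‖ ≤ (N / d) ^ k * ‖x 0 - xs‖ := by
    intro k
    induction k with
    | zero => simp
    | succ k ih =>
        calc ‖x (k + 1) - xs‖ ≤ (N / d) * ‖x k - xs‖ := hcontr k
          _ ≤ (N / d) * ((N / d) ^ k * ‖x 0 - xs‖) := mul_le_mul_of_nonneg_left ih hc0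
          _ = (N / d) ^ (k + 1) * ‖x 0 - xs‖ := by ring
  refine ⟨⟨N / d, hc0, hc1, hcontr⟩, ?_⟩
  rw [tendsto_iff_norm_sub_tendsto_zero]
  apply squeeze_zero (fun k => norm_nonneg _) hgeo
  simpa using (tendsto_pow_atTop_nhds_zero_of_lt_one hc0 hc1).mul_const ‖x 0 - xs‖
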